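/- Let φ be a lower semicontinuous submeasure on ω with φ(ω) = ∞ such that the Σ⁰₂ ideal I = Fin(φ) is not countably generated. Then there exist A ∈ I⁺ (i.e. A ⊆ ω with A ∉ I), a sequence c ∈ ω^ω with c(n) ≥ 1 for all n, and a bijection f : A → T_c such that: (i) φ(f⁻¹[{t⌢(i) : i < c(n)}]) > n+1 for every n ∈ ω and every t ∈ T_c of length n; and (ii) f⁻¹[A_x] ∈ I for every x ∈ T̂_c. -/

import Mathlib

open MeasureTheory Set

/-- An ideal on a (countable) set `X`. -/
def IsIdeal {X : Type} (I : Set (Set X)) : Prop :=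
  (∀ A B : Set X, A ∈ I → B ∈ I → A ∪ B ∈ I) ∧
  (∀ A B : Set X, A ⊆ B → B ∈ I → A ∈ I) ∧
  (∀ A : Set X, A.Finite → A ∈ I) ∧
  (Set.univ : Set X) ∉ I

/-- `I`-pointwise convergence on `[0,1]` of a family of functions. -/
def IConvPtwise {X : Type} (I : Set (Set X)) (f : X → ℝ → ℝ) (g : ℝ → ℝ) : Prop :=
  ∀ t ∈ Icc (0:ℝ) 1, ∀ ε : ℝ, 0 < ε → {a : X | ε ≤ |f a t - g t|} ∈ I

/-- `I`-uniform convergence on `M` of a family of functions. -/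
def IConvUnif {X : Type} (I : Set (Set X)) (f : X → ℝ → ℝ) (g : ℝ → ℝ) (M : Set ℝ) : Prop :=
  ∀ ε : ℝ, 0 < ε → {a : X | ∃ t ∈ M, ε ≤ |f a t - g t|} ∈ I

/-- `I` is an Egorov ideal. -/
def IsEgorov {X : Type} (I : Set (Set X)) : Prop :=
  ∀ (f : X → ℝ → ℝ) (g : ℝ → ℝ),
    (∀ a : X, AEMeasurable (f a) (volume.restrict (Icc (0:ℝ) 1))) →
    AEMeasurable g (volume.restrict (Icc (0:ℝ) 1)) →
    IConvPtwise I f g →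
    ∀ η : ℝ, 0 < η →
      ∃ M : Set ℝ, M ⊆ Icc (0:ℝ) 1 ∧ NullMeasurableSet M volume ∧
        volume (Icc (0:ℝ) 1 \ M) < ENNReal.ofReal η ∧
        IConvUnif I f g M

def IsSubmeasure (φ : Set ℕ → ENNReal) : Prop :=
  φ ∅ = 0 ∧ (∀ n : ℕ, φ {n} < ⊤) ∧
  ∀ A B : Set ℕ, φ A ≤ φ (A ∪ B) ∧ φ (A ∪ B) ≤ φ A + φ B

def IsLscSubmeasure (φ : Set ℕ → ENNReal) : Prop :=
  ∀ A : Set ℕ, φ A = ⨆ n : ℕ, φ (A ∩ Iio n)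

def IsNonpathological (φ : Set ℕ → ENNReal) : Prop :=
  ∀ A : Set ℕ, φ A = ⨆ (μ : Measure ℕ) (_ : ∀ B : Set ℕ, μ B ≤ φ B), μ A

/-- `I` is a non-pathological Σ⁰₂ ideal: `I = Fin(φ)` for some non-pathological
lsc submeasure `φ` with `φ(ω) = ∞`. -/
def IsNonpathSigma2 (I : Set (Set ℕ)) : Prop :=
  ∃ φ : Set ℕ → ENNReal, IsSubmeasure φ ∧ IsLscSubmeasure φ ∧ IsNonpathological φ ∧
    φ Set.univ = ⊤ ∧ I = {A : Set ℕ | φ A < ⊤}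

def IdealCountablyGenerated {X : Type} (I : Set (Set X)) : Prop :=
  ∃ B : Set (Set X), B.Countable ∧ B ⊆ I ∧
    ∀ A ∈ I, ∃ F : Set (Set X), F ⊆ B ∧ F.Finite ∧ A ⊆ ⋃₀ F

def IdealIso {X Y : Type} (I : Set (Set X)) (J : Set (Set Y)) : Prop :=
  ∃ f : Y → X, Function.Bijective f ∧ ∀ A : Set X, (A ∈ I ↔ f ⁻¹' A ∈ J)

def RKle {X Y : Type} (I : Set (Set X)) (J : Set (Set Y)) : Prop :=
  ∃ f : Y → X, ∀ A : Set X, (A ∈ I ↔ f ⁻¹' A ∈ J)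

def RBle {X Y : Type} (I : Set (Set X)) (J : Set (Set Y)) : Prop :=
  ∃ f : Y → X, (∀ x : X, (f ⁻¹' {x}).Finite) ∧ ∀ A : Set X, (A ∈ I ↔ f ⁻¹' A ∈ J)

/-- The restriction `I↾A` of an ideal, as an ideal on the subtype `↥A`. -/
def restrictIdeal {X : Type} (I : Set (Set X)) (A : Set X) : Set (Set ↥A) :=
  {S : Set ↥A | (Subtype.val '' S) ∈ I}

def IsTall {X : Type} (I : Set (Set X)) : Prop :=
  ∀ A : Set X, A.Infinite → ∃ B ∈ I, B.Infinite ∧ B ⊆ A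

/-- The tree `T_c` of finite sequences `s` with `s(i) < c(i)` for all `i < |s|`. -/
def Tc (c : ℕ → ℕ) : Set (List ℕ) := {s : List ℕ | ∀ i : Fin s.length, s.get i < c i.1}

/-- The branch `A_x = {x↾n : n ∈ ω}` of `x` through `T_c`. -/
def branchOf (x : ℕ → ℕ) : Set (List ℕ) := {s : List ℕ | ∃ n : ℕ, s = (List.range n).map x}

open scoped Classical
section Aux
def Nodes (c : ℕ → ℕ) : ℕ → Set (List ℕ)
  | 0 => {[]}
  | n+1 => {u | ∃ t ∈ Nodes c n, ∃ i, i < c n ∧ u = t ++ [i]}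

theorem nodes_length {c : ℕ → ℕ} : ∀ {n : ℕ} {t : List ℕ}, t ∈ Nodes c n → t.length = n := by
  intro n
  induction n with
  | zero => intro t ht; simp [Nodes] at ht; simp [ht]
  | succ n ih =>
    rintro u ⟨t, ht, i, hi, rfl⟩
    simp [ih ht]

theorem nodes_finite (c : ℕ → ℕ) : ∀ n, (Nodes c n).Finite := by
  intro n
  induction n with
  | zero => exact Set.finite_singleton _
  | succ n ih =>
    have h : Nodes c (n+1) ⊆ (fun q : List ℕ × ℕ => q.1 ++ [q.2]) '' ((Nodes c n) ×ˢ (Set.Iio (c n))) := by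
      rintro u ⟨t, ht, i, hi, rfl⟩
      exact ⟨(t, i), ⟨ht, hi⟩, rfl⟩
    exact ((ih.prod (Set.finite_Iio _)).image _).subset h

theorem nodes_congr {c c' : ℕ → ℕ} : ∀ {n : ℕ}, (∀ i < n, c i = c' i) → Nodes c n = Nodes c' n := by
  intro n
  induction n with
  | zero => intro _; rfl
  | succ n ih =>
    intro h
    have h2 := ih (fun i hi => h i (Nat.lt_succ_of_lt hi))
    simp only [Nodes, h2, h n (Nat.lt_succ_self n)]

theorem replicate_mem_nodes {c : ℕ → ℕ} {n : ℕ} (h : ∀ k < n, 1 ≤ c k) :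
    List.replicate n 0 ∈ Nodes c n := by
  induction n with
  | zero => simp [Nodes]
  | succ n ih =>
    refine ⟨List.replicate n 0, ih (fun k hk => h k (Nat.lt_succ_of_lt hk)), 0,
      h n (Nat.lt_succ_self n), ?_⟩
    exact List.replicate_succ'

theorem mem_tc_concat {c : ℕ → ℕ} {t : List ℕ} {i : ℕ} :
    t ++ [i] ∈ Tc c ↔ t ∈ Tc c ∧ i < c t.length := by
  constructor
  · intro h
    constructor
    · intro j
      have hj : (j : ℕ) < (t ++ [i]).length := by
        simp only [List.length_append, List.length_singleton]
        exact Nat.lt_succ_of_lt j.2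
      have h2 := h ⟨j, hj⟩
      simp only [List.get_eq_getElem] at h2 ⊢
      rwa [List.getElem_append_left j.2] at h2
    · have hj : t.length < (t ++ [i]).length := by simp
      have h2 := h ⟨t.length, hj⟩
      simp only [List.get_eq_getElem] at h2
      rwa [List.getElem_concat_length rfl] at h2
  · rintro ⟨h1, h2⟩ j
    rcases Nat.lt_or_ge (j : ℕ) t.length with hj | hj
    · simp only [List.get_eq_getElem]
      rw [List.getElem_append_left hj]
      exact h1 ⟨j, hj⟩
    · have hj2 : (j : ℕ) = t.length := by
        have := j.2
        simp only [List.length_append, List.length_singleton] at this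
        omega
      simp only [List.get_eq_getElem]
      have h3 : (t ++ [i])[(j:ℕ)]'(j.2) = i := by
        exact List.getElem_concat_length hj2 _
      rw [h3, hj2]
      exact h2

theorem tc_eq_nodes (c : ℕ → ℕ) {t : List ℕ} : t ∈ Tc c ↔ t ∈ Nodes c t.length := by
  induction t using List.reverseRecOn with
  | nil =>
    simp only [List.length_nil]
    constructor
    · intro _; simp [Nodes]
    · intro _ i; exact absurd i.2 (by simp)
  | append_singleton t i ih =>
    rw [mem_tc_concat]
    simp only [List.length_append, List.length_singleton]
    constructor
    · rintro ⟨h1, h2⟩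
      exact ⟨t, ih.1 h1, i, h2, rfl⟩
    · rintro ⟨t', ht', i', hi', heq⟩
      have hlt : t' = t ∧ i' = i := by
        have := List.append_inj' heq.symm rfl
        simpa using this
      obtain ⟨rfl, rfl⟩ := hlt
      have hlen := nodes_length ht'
      exact ⟨ih.2 (by rwa [hlen]), by rwa [hlen] at hi' ⊢⟩

variable {φ : Set ℕ → ENNReal}

theorem phi_mono (hφ : IsSubmeasure φ) {A B : Set ℕ} (h : A ⊆ B) : φ A ≤ φ B := by
  have h2 := (hφ.2.2 A B).1
  rwa [Set.union_eq_self_of_subset_left h] at h2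

theorem phi_finite (hφ : IsSubmeasure φ) {S : Set ℕ} (h : S.Finite) : φ S < ⊤ := by
  refine Set.Finite.induction_on (motive := fun S _ => φ S < ⊤) S h (by simp [hφ.1]) ?_
  intro a s _ _ ih
  have h2 : φ (insert a s) ≤ φ {a} + φ s := by
    have h3 := (hφ.2.2 {a} s).2
    rwa [Set.singleton_union] at h3
  exact lt_of_le_of_lt h2 (ENNReal.add_lt_top.2 ⟨hφ.2.1 a, ih⟩)

theorem phi_diff_top (hφ : IsSubmeasure φ) {Z U : Set ℕ} (hZ : φ Z = ⊤) (hU : φ U ≠ ⊤) :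
    φ (Z \ U) = ⊤ := by
  by_contra hc
  have h1 : Z ⊆ (Z \ U) ∪ U := by
    intro z hz
    by_cases h : z ∈ U
    · exact Or.inr h
    · exact Or.inl ⟨hz, h⟩
  have h2 : φ Z ≤ φ (Z \ U) + φ U :=
    le_trans (phi_mono hφ h1) (hφ.2.2 _ _).2
  rw [hZ] at h2
  exact (ENNReal.add_lt_top.2 ⟨lt_top_iff_ne_top.2 hc, lt_top_iff_ne_top.2 hU⟩).ne (top_le_iff.1 h2)

theorem phi_infinite (hφ : IsSubmeasure φ) {Z : Set ℕ} (hZ : φ Z = ⊤) : Z.Infinite := by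
  intro hfin
  exact (phi_finite hφ hfin).ne hZ

theorem exists_big_finset (hφ : IsSubmeasure φ) (hlsc : IsLscSubmeasure φ)
    {Z U : Set ℕ} (hZ : φ Z = ⊤) (hU : U.Finite) (b : ENNReal) (hb : b ≠ ⊤) :
    ∃ F : Finset ℕ, ↑F ⊆ Z \ U ∧ b < φ ↑F := by
  have h1 : φ (Z \ U) = ⊤ := phi_diff_top hφ hZ (phi_finite hφ hU).ne
  have h2 := hlsc (Z \ U)
  rw [h1] at h2
  have h3 : b < ⨆ n : ℕ, φ ((Z \ U) ∩ Iio n) := by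
    rw [← h2]; exact lt_top_iff_ne_top.2 hb
  obtain ⟨n, hn⟩ := lt_iSup_iff.1 h3
  have hfin : ((Z \ U) ∩ Iio n).Finite := (Set.finite_Iio _).subset inter_subset_right
  refine ⟨hfin.toFinset, ?_, ?_⟩
  · rw [hfin.coe_toFinset]; exact inter_subset_left
  · rwa [hfin.coe_toFinset]

/-- Pass 1: pick pairwise disjoint finsets of large submeasure. -/
theorem pick_disjoint (hφ : IsSubmeasure φ) (hlsc : IsLscSubmeasure φ)
    (b : ENNReal) (hb : b ≠ ⊤) (U₀ : Set ℕ) (hU₀ : U₀.Finite) (Z : List ℕ → Set ℕ)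
    (s : Finset (List ℕ)) (hZ : ∀ t ∈ s, φ (Z t) = ⊤) :
    ∃ F : List ℕ → Finset ℕ,
      (∀ t ∈ s, ↑(F t) ⊆ Z t \ U₀ ∧ b < φ ↑(F t)) ∧
      (∀ t ∈ s, ∀ t' ∈ s, t ≠ t' → ∀ q, q ∈ F t → q ∉ F t') := by
  classical
  induction s using Finset.induction_on with
  | empty => exact ⟨fun _ => ∅, by simp, by simp⟩
  | insert _ _ hnotmem ih =>
    rename_i t₀ s
    obtain ⟨F, hF1, hF2⟩ := ih (fun t ht => hZ t (Finset.mem_insert_of_mem ht))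
    obtain ⟨F₀, hF₀sub, hF₀big⟩ := exists_big_finset hφ hlsc
      (hZ t₀ (Finset.mem_insert_self t₀ s)) (hU₀.union (s.biUnion F).finite_toSet) b hb
    refine ⟨fun t => if t = t₀ then F₀ else F t, ?_, ?_⟩
    · intro t ht
      rcases Finset.mem_insert.1 ht with rfl | ht'
      · simp only [if_pos rfl]
        constructor
        · refine subset_trans hF₀sub ?_
          intro q hq
          exact ⟨hq.1, fun h => hq.2 (Or.inl h)⟩
        · exact hF₀big
      · have hne : t ≠ t₀ := by rintro rfl; exact hnotmem ht'
        simp only [if_neg hne]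
        exact hF1 t ht'
    · intro t ht t' ht' hne q hq hq'
      dsimp only at hq hq'
      rcases Finset.mem_insert.1 ht with rfl | h1 <;> rcases Finset.mem_insert.1 ht' with rfl | h2
      · exact hne rfl
      · -- t = t₀, t' ∈ s
        rw [if_pos rfl] at hq
        rw [if_neg (show ¬ t' = t from fun h => hnotmem (h ▸ h2))] at hq'
        have := hF₀sub hq
        exact this.2 (Or.inr (Finset.mem_coe.2 (Finset.mem_biUnion.2 ⟨t', h2, hq'⟩)))
      · -- t ∈ s, t' = t₀
        have hne2 : t ≠ t' := hne
        rw [if_pos rfl] at hq'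
        have hne3 : t ≠ t' := hne
        rw [if_neg (by rintro rfl; exact hnotmem h1)] at hq
        have := hF₀sub hq'
        exact this.2 (Or.inr (Finset.mem_coe.2 (Finset.mem_biUnion.2 ⟨t, h1, hq⟩)))
      · rw [if_neg (by rintro rfl; exact hnotmem h1)] at hq
        rw [if_neg (by rintro rfl; exact hnotmem h2)] at hq'
        exact hF2 t h1 t' h2 hne q hq hq'

/-- Pass 2: pad pairwise disjoint finsets to uniform size. -/
theorem pad_finsets (U₀ : Set ℕ) (hU₀ : U₀.Finite) (Z : List ℕ → Set ℕ) (c : ℕ) :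
    ∀ (s : Finset (List ℕ)), (∀ t ∈ s, (Z t).Infinite) →
    ∀ (V : Finset ℕ) (F : List ℕ → Finset ℕ),
      (∀ t ∈ s, ↑(F t) ⊆ Z t \ U₀) →
      (∀ t ∈ s, ∀ t' ∈ s, t ≠ t' → ∀ q, q ∈ F t → q ∉ F t') →
      (∀ t ∈ s, (F t).card ≤ c) →
    ∃ F' : List ℕ → Finset ℕ,
      (∀ t ∈ s, F t ⊆ F' t ∧ ↑(F' t) ⊆ Z t \ U₀ ∧ (F' t).card = c ∧
        ∀ q ∈ F' t, q ∉ F t → q ∉ V) ∧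
      (∀ t ∈ s, ∀ t' ∈ s, t ≠ t' → ∀ q, q ∈ F' t → q ∉ F' t') := by
  classical
  intro s
  induction s using Finset.induction_on with
  | empty => intro _ V F _ _ _; exact ⟨F, by simp, by simp⟩
  | insert _ _ hnotmem ih =>
    rename_i t₀ s
    intro hinf V F hsub hdisj hcard
    -- pad t₀ first
    have hW : (Z t₀ \ (U₀ ∪ ↑V ∪ ↑(s.biUnion F) ∪ ↑(F t₀))).Infinite := by
      apply Set.Infinite.diff (hinf t₀ (Finset.mem_insert_self t₀ s))
      exact ((hU₀.union V.finite_toSet).union (s.biUnion F).finite_toSet).union (F t₀).finite_toSet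
    obtain ⟨P, hPsub, hPcard⟩ := hW.exists_subset_card_eq (c - (F t₀).card)
    set F₀ : Finset ℕ := F t₀ ∪ P with hF₀def
    have hPdisj : ∀ q ∈ P, q ∉ F t₀ := by
      intro q hq hq'
      exact (hPsub hq).2 (Or.inr hq')
    have hF₀card : F₀.card = c := by
      rw [Finset.card_union_of_disjoint]
      · have h2 := hcard t₀ (Finset.mem_insert_self t₀ s)
        rw [hPcard]; omega
      · exact Finset.disjoint_left.2 (fun q hq hq' => hPdisj q hq' hq)
    obtain ⟨F', hF'1, hF'2⟩ := ih (fun t ht => hinf t (Finset.mem_insert_of_mem ht))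
      (V ∪ F₀) F
      (fun t ht => hsub t (Finset.mem_insert_of_mem ht))
      (fun t ht t' ht' => hdisj t (Finset.mem_insert_of_mem ht) t' (Finset.mem_insert_of_mem ht'))
      (fun t ht => hcard t (Finset.mem_insert_of_mem ht))
    refine ⟨fun t => if t = t₀ then F₀ else F' t, ?_, ?_⟩
    · intro t ht
      rcases Finset.mem_insert.1 ht with rfl | ht'
      · simp only [if_pos rfl]
        refine ⟨Finset.subset_union_left, ?_, hF₀card, ?_⟩
        · intro q hq
          rcases Finset.mem_coe.1 hq |> Finset.mem_union.1 with h | h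
          · exact hsub t (Finset.mem_insert_self t s) h
          · have := hPsub h
            exact ⟨this.1, fun hu => this.2 (Or.inl (Or.inl (Or.inl hu)))⟩
        · intro q hq hqn hqV
          rcases Finset.mem_union.1 hq with h | h
          · exact hqn h
          · exact (hPsub h).2 (Or.inl (Or.inl (Or.inr hqV)))
      · have hne : t ≠ t₀ := by rintro rfl; exact hnotmem ht'
        simp only [if_neg hne]
        obtain ⟨h1, h2, h3, h4⟩ := hF'1 t ht'
        exact ⟨h1, h2, h3, fun q hq hqn hqV => h4 q hq hqn (Finset.mem_union_left _ hqV)⟩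
    · intro t ht t' ht' hne q hq hq'
      dsimp only at hq hq'
      rcases Finset.mem_insert.1 ht with rfl | h1 <;> rcases Finset.mem_insert.1 ht' with rfl | h2
      · exact hne rfl
      · -- t = t₀
        rw [if_pos rfl] at hq
        rw [if_neg (by rintro rfl; exact hnotmem h2)] at hq'
        -- q ∈ F₀, q ∈ F' t'
        by_cases hqF : q ∈ F t'
        · rcases Finset.mem_union.1 hq with h | h
          · exact hdisj t (Finset.mem_insert_self _ _) t' (Finset.mem_insert_of_mem h2) hne q h hqF
          · exact (hPsub h).2 (Or.inl (Or.inr (Finset.mem_coe.2 (Finset.mem_biUnion.2 ⟨t', h2, hqF⟩))))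
        · exact (hF'1 t' h2).2.2.2 q hq' hqF (Finset.mem_union_right _ hq)
      · rw [if_pos rfl] at hq'
        rw [if_neg (by rintro rfl; exact hnotmem h1)] at hq
        by_cases hqF : q ∈ F t
        · rcases Finset.mem_union.1 hq' with h | h
          · exact hdisj t' (Finset.mem_insert_self _ _) t (Finset.mem_insert_of_mem h1) (Ne.symm hne) q h hqF
          · exact (hPsub h).2 (Or.inl (Or.inr (Finset.mem_coe.2 (Finset.mem_biUnion.2 ⟨t, h1, hqF⟩))))
        · exact (hF'1 t h1).2.2.2 q hq hqF (Finset.mem_union_right _ hq')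
      · rw [if_neg (by rintro rfl; exact hnotmem h1)] at hq
        rw [if_neg (by rintro rfl; exact hnotmem h2)] at hq'
        exact hF'2 t h1 t' h2 hne q hq hq'


structure TreeSt (φ : Set ℕ → ENNReal) (G : Set (Set ℕ)) (n : ℕ) where
  c : ℕ → ℕ
  a : List ℕ → ℕ
  Y : List ℕ → Set ℕ
  inv1 : ∀ k < n, 1 ≤ c k
  inv2 : ∀ k ≤ n, ∀ l ≤ n, ∀ t ∈ Nodes c k, ∀ t' ∈ Nodes c l, a t = a t' → t = t'
  inv3 : ∀ k ≤ n, ∀ t ∈ Nodes c k, Y t ∈ G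
  inv4 : ∀ k < n, ∀ t ∈ Nodes c k, ∀ i < c k, Y (t ++ [i]) = Y t ∪ {a (t ++ [i])}
  inv5 : ∀ k ≤ n, ∀ t ∈ Nodes c k, a t ∈ Y t
  inv6 : ∀ k < n, ∀ t ∈ Nodes c k,
    ((k : ENNReal) + 1) < φ ((fun i => a (t ++ [i])) '' (Set.Iio (c k)))

theorem tree_step {φ : Set ℕ → ENNReal} {M : ℕ} {G : Set (Set ℕ)}
    (hφ : IsSubmeasure φ) (hlsc : IsLscSubmeasure φ)
    (hG : ∀ Y ∈ G, φ Y ≤ M ∧ φ {p | Y ∪ {p} ∈ G} = ⊤)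
    {n : ℕ} (s : TreeSt φ G n) :
    ∃ s' : TreeSt φ G (n+1), (∀ k < n, s'.c k = s.c k) ∧
      (∀ t : List ℕ, t.length ≤ n → s'.a t = s.a t) ∧
      (∀ t : List ℕ, t.length ≤ n → s'.Y t = s.Y t) := by
  classical
  -- used points
  have hDomfin : (⋃ k ∈ Set.Iic n, Nodes s.c k).Finite :=
    Set.Finite.biUnion (Set.finite_Iic n) (fun k _ => nodes_finite s.c k)
  set U : Set ℕ := s.a '' (⋃ k ∈ Set.Iic n, Nodes s.c k) with hUdef
  have hUfin : U.Finite := hDomfin.image _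
  set Z : List ℕ → Set ℕ := fun t => {p | s.Y t ∪ {p} ∈ G} with hZdef
  have hZtop : ∀ t ∈ Nodes s.c n, φ (Z t) = ⊤ :=
    fun t ht => (hG _ (s.inv3 n le_rfl t ht)).2
  set NodesN : Finset (List ℕ) := (nodes_finite s.c n).toFinset with hNN
  have hNNmem : ∀ t, t ∈ NodesN ↔ t ∈ Nodes s.c n := by
    intro t; rw [hNN, Set.Finite.mem_toFinset]
  obtain ⟨F, hF1, hF2⟩ := pick_disjoint hφ hlsc ((n : ENNReal) + 1)
    (by simp) U hUfin Z NodesN (fun t ht => hZtop t ((hNNmem t).1 ht))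
  set cn := NodesN.sup (fun t => (F t).card) with hcn
  have hcardle : ∀ t ∈ NodesN, (F t).card ≤ cn := by
    intro t ht; rw [hcn]; exact Finset.le_sup (f := fun t => (F t).card) ht
  obtain ⟨F', hF'1, hF'2⟩ := pad_finsets U hUfin Z cn NodesN
    (fun t ht => phi_infinite hφ (hZtop t ((hNNmem t).1 ht))) ∅ F
    (fun t ht => (hF1 t ht).1) hF2 hcardle
  -- cn ≥ 1
  have hrep : List.replicate n 0 ∈ NodesN := (hNNmem _).2 (replicate_mem_nodes s.inv1)
  have hcn1 : 1 ≤ cn := by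
    have hne : (F (List.replicate n 0)).Nonempty := by
      rcases Finset.eq_empty_or_nonempty (F (List.replicate n 0)) with he | hne
      · exfalso
        have h2 := (hF1 _ hrep).2
        rw [he, Finset.coe_empty, hφ.1] at h2
        exact absurd h2 (by simp)
      · exact hne
    exact le_trans (Finset.card_pos.2 hne) (hcardle _ hrep)
  -- definitions of the new state
  set c' : ℕ → ℕ := Function.update s.c n cn with hc'
  have hc'lt : ∀ i < n, c' i = s.c i := by
    intro i hi; rw [hc']; exact Function.update_of_ne (Nat.ne_of_lt hi) _ _
  have hc'n : c' n = cn := by rw [hc']; exact Function.update_self _ _ _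
  have hnodes : ∀ k ≤ n, Nodes c' k = Nodes s.c k := by
    intro k hk
    exact (nodes_congr (fun i hi => (hc'lt i (lt_of_lt_of_le hi hk)).symm)).symm
  set newa : List ℕ → ℕ := fun u =>
    if u.length = n+1 then ((F' u.dropLast).sort (·≤·)).getD (u.getLast?.getD 0) 0
    else s.a u with hnat
  set newY : List ℕ → Set ℕ := fun u =>
    if u.length = n+1 then s.Y u.dropLast ∪ {newa u} else s.Y u with hnYt
  -- basic value lemmas
  have holda : ∀ t : List ℕ, t.length ≤ n → newa t = s.a t := by
    intro t ht; rw [hnat]; simp only [if_neg (by omega : ¬ t.length = n+1)]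
  have holdY : ∀ t : List ℕ, t.length ≤ n → newY t = s.Y t := by
    intro t ht; rw [hnYt]; simp only [if_neg (by omega : ¬ t.length = n+1)]
  have hlensucc : ∀ {t : List ℕ} {i : ℕ}, t ∈ Nodes s.c n → (t ++ [i]).length = n + 1 := by
    intro t i ht; simp [nodes_length ht]
  have hnewa : ∀ t ∈ Nodes s.c n, ∀ i : ℕ,
      newa (t ++ [i]) = ((F' t).sort (·≤·)).getD i 0 := by
    intro t ht i
    rw [hnat]
    simp only [if_pos (hlensucc ht), List.dropLast_concat, List.getLast?_concat,
      Option.getD_some]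
  have hsortlen : ∀ t ∈ Nodes s.c n, ((F' t).sort (·≤·)).length = cn := by
    intro t ht
    rw [Finset.length_sort]
    exact (hF'1 t ((hNNmem t).2 ht)).2.2.1
  have hmemF' : ∀ t ∈ Nodes s.c n, ∀ i < cn, newa (t ++ [i]) ∈ F' t := by
    intro t ht i hi
    rw [hnewa t ht i]
    have hl : i < ((F' t).sort (·≤·)).length := by rw [hsortlen t ht]; exact hi
    rw [List.getD_eq_getElem _ _ hl]
    exact (Finset.mem_sort _).1 (List.getElem_mem hl)
  have himage : ∀ t ∈ Nodes s.c n,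
      (fun i => newa (t ++ [i])) '' (Set.Iio cn) = ↑(F' t) := by
    intro t ht
    apply Set.Subset.antisymm
    · rintro q ⟨i, hi, rfl⟩
      exact hmemF' t ht i hi
    · intro q hq
      have : q ∈ (F' t).sort (·≤·) := (Finset.mem_sort _).2 hq
      obtain ⟨j, hj, hjq⟩ := List.getElem_of_mem this
      refine ⟨j, by rw [← hsortlen t ht]; exact hj, ?_⟩
      show newa (t ++ [j]) = q
      rw [hnewa t ht j, List.getD_eq_getElem _ _ hj, hjq]
  have hinj_new : ∀ t ∈ Nodes s.c n, ∀ i < cn, ∀ t' ∈ Nodes s.c n, ∀ i' < cn,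
      newa (t ++ [i]) = newa (t' ++ [i']) → t = t' ∧ i = i' := by
    intro t ht i hi t' ht' i' hi' heq
    by_cases htt : t = t'
    · subst htt
      refine ⟨rfl, ?_⟩
      rw [hnewa t ht i, hnewa t ht i'] at heq
      have hl : i < ((F' t).sort (·≤·)).length := by rw [hsortlen t ht]; exact hi
      have hl' : i' < ((F' t).sort (·≤·)).length := by rw [hsortlen t ht]; exact hi'
      rw [List.getD_eq_getElem _ _ hl, List.getD_eq_getElem _ _ hl'] at heq
      exact (List.Nodup.getElem_inj_iff (Finset.sort_nodup _ _)).1 heq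
    · exfalso
      exact hF'2 t ((hNNmem t).2 ht) t' ((hNNmem t').2 ht') htt _
        (hmemF' t ht i hi) (heq ▸ hmemF' t' ht' i' hi')
  have hsubZU : ∀ t ∈ Nodes s.c n, ↑(F' t) ⊆ Z t \ U := by
    intro t ht
    exact (hF'1 t ((hNNmem t).2 ht)).2.1
  have haU : ∀ k ≤ n, ∀ t ∈ Nodes s.c k, s.a t ∈ U := by
    intro k hk t ht
    exact ⟨t, Set.mem_biUnion hk ht, rfl⟩
  -- characterize new level nodes
  have hsucc : ∀ u, u ∈ Nodes c' (n+1) ↔ ∃ t ∈ Nodes s.c n, ∃ i, i < cn ∧ u = t ++ [i] := by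
    intro u
    show (∃ t ∈ Nodes c' n, ∃ i, i < c' n ∧ u = t ++ [i]) ↔ _
    rw [hnodes n le_rfl, hc'n]
  refine ⟨⟨c', newa, newY, ?_, ?_, ?_, ?_, ?_, ?_⟩, hc'lt, holda, holdY⟩
  · -- inv1
    intro k hk
    rcases Nat.lt_succ_iff_lt_or_eq.1 hk with h | rfl
    · rw [hc'lt k h]; exact s.inv1 k h
    · rw [hc'n]; exact hcn1
  · -- inv2
    intro k hk l hl t ht t' ht' heq
    rcases Nat.lt_succ_iff_lt_or_eq.1 (Nat.lt_succ_of_le hk) with hk' | rfl <;>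
      rcases Nat.lt_succ_iff_lt_or_eq.1 (Nat.lt_succ_of_le hl) with hl' | rfl
    · -- both ≤ n
      have hk2 : k ≤ n := Nat.lt_succ_iff.1 hk'
      have hl2 : l ≤ n := Nat.lt_succ_iff.1 hl'
      rw [hnodes k hk2] at ht; rw [hnodes l hl2] at ht'
      rw [holda t (by rw [nodes_length ht]; exact hk2),
        holda t' (by rw [nodes_length ht']; exact hl2)] at heq
      exact s.inv2 k hk2 l hl2 t ht t' ht' heq
    · -- k ≤ n, l = n+1
      exfalso
      have hk2 : k ≤ n := Nat.lt_succ_iff.1 hk'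
      rw [hnodes k hk2] at ht
      obtain ⟨t₂, ht₂, i, hi, rfl⟩ := (hsucc t').1 ht'
      rw [holda t (by rw [nodes_length ht]; exact hk2)] at heq
      have h1 := hmemF' t₂ ht₂ i hi
      rw [← heq] at h1
      exact (hsubZU t₂ ht₂ h1).2 (haU k hk2 t ht)
    · -- k = n+1, l ≤ n
      exfalso
      have hl2 : l ≤ n := Nat.lt_succ_iff.1 hl'
      rw [hnodes l hl2] at ht'
      obtain ⟨t₂, ht₂, i, hi, rfl⟩ := (hsucc t).1 ht
      rw [holda t' (by rw [nodes_length ht']; exact hl2)] at heq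
      have h1 := hmemF' t₂ ht₂ i hi
      rw [heq] at h1
      exact (hsubZU t₂ ht₂ h1).2 (haU l hl2 t' ht')
    · -- both n+1
      obtain ⟨t₂, ht₂, i, hi, rfl⟩ := (hsucc t).1 ht
      obtain ⟨t₃, ht₃, i', hi', rfl⟩ := (hsucc t').1 ht'
      obtain ⟨rfl, rfl⟩ := hinj_new t₂ ht₂ i hi t₃ ht₃ i' hi' heq
      rfl
  · -- inv3
    intro k hk t ht
    rcases Nat.lt_succ_iff_lt_or_eq.1 (Nat.lt_succ_of_le hk) with hk' | rfl
    · have hk2 : k ≤ n := Nat.lt_succ_iff.1 hk'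
      rw [hnodes k hk2] at ht
      rw [holdY t (by rw [nodes_length ht]; exact hk2)]
      exact s.inv3 k hk2 t ht
    · obtain ⟨t₂, ht₂, i, hi, rfl⟩ := (hsucc t).1 ht
      have hY : newY (t₂ ++ [i]) = s.Y t₂ ∪ {newa (t₂ ++ [i])} := by
        rw [hnYt]
        simp only [if_pos (hlensucc ht₂), List.dropLast_concat]
      rw [hY]
      have := (hsubZU t₂ ht₂ (hmemF' t₂ ht₂ i hi)).1
      exact this
  · -- inv4
    intro k hk t ht i hi
    rcases Nat.lt_succ_iff_lt_or_eq.1 hk with hk' | hke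
    swap
    · have hke' : n = k := hke.symm
      subst hke'
      rw [hnodes n le_rfl] at ht
      rw [hc'n] at hi
      have hY : newY (t ++ [i]) = s.Y t ∪ {newa (t ++ [i])} := by
        rw [hnYt]
        simp only [if_pos (hlensucc ht), List.dropLast_concat]
      rw [hY, holdY t (by rw [nodes_length ht])]
    · have hk2 : k ≤ n := le_of_lt hk'
      rw [hnodes k hk2] at ht
      rw [hc'lt k hk'] at hi
      have hlen : (t ++ [i]).length = k + 1 := by simp [nodes_length ht]
      rw [holdY (t ++ [i]) (by omega), holdY t (by rw [nodes_length ht]; exact hk2),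
        holda (t ++ [i]) (by omega)]
      exact s.inv4 k hk' t ht i hi
  · -- inv5
    intro k hk t ht
    rcases Nat.lt_succ_iff_lt_or_eq.1 (Nat.lt_succ_of_le hk) with hk' | rfl
    · have hk2 : k ≤ n := Nat.lt_succ_iff.1 hk'
      rw [hnodes k hk2] at ht
      rw [holdY t (by rw [nodes_length ht]; exact hk2),
        holda t (by rw [nodes_length ht]; exact hk2)]
      exact s.inv5 k hk2 t ht
    · obtain ⟨t₂, ht₂, i, hi, rfl⟩ := (hsucc t).1 ht
      have hY : newY (t₂ ++ [i]) = s.Y t₂ ∪ {newa (t₂ ++ [i])} := by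
        rw [hnYt]
        simp only [if_pos (hlensucc ht₂), List.dropLast_concat]
      rw [hY]
      exact Or.inr rfl
  · -- inv6
    intro k hk t ht
    rcases Nat.lt_succ_iff_lt_or_eq.1 hk with hk' | hke
    swap
    · have hke' : n = k := hke.symm
      subst hke'
      rw [hnodes n le_rfl] at ht
      rw [hc'n, himage t ht]
      calc ((n : ENNReal) + 1) < φ ↑(F t) := (hF1 t ((hNNmem t).2 ht)).2
        _ ≤ φ ↑(F' t) := phi_mono hφ (by exact_mod_cast (hF'1 t ((hNNmem t).2 ht)).1)
    · have hk2 : k ≤ n := le_of_lt hk'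
      rw [hnodes k hk2] at ht
      rw [hc'lt k hk']
      have himg : (fun i => newa (t ++ [i])) '' (Set.Iio (s.c k))
          = (fun i => s.a (t ++ [i])) '' (Set.Iio (s.c k)) := by
        apply Set.image_congr
        intro i _
        exact holda (t ++ [i]) (by simp [nodes_length ht]; omega)
      rw [himg]
      exact s.inv6 k hk' t ht

theorem tree_base {φ : Set ℕ → ENNReal} {M : ℕ} {G : Set (Set ℕ)}
    (hφ : IsSubmeasure φ)
    (hG : ∀ Y ∈ G, φ Y ≤ M ∧ φ {p | Y ∪ {p} ∈ G} = ⊤)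
    (Y0 : Set ℕ) (hY0 : Y0 ∈ G) : ∃ _s : TreeSt φ G 0, True := by
  have hZ : φ {p | Y0 ∪ {p} ∈ G} = ⊤ := (hG Y0 hY0).2
  have hne : {p | Y0 ∪ {p} ∈ G}.Nonempty := by
    rcases Set.eq_empty_or_nonempty {p | Y0 ∪ {p} ∈ G} with he | h
    · exfalso; rw [he, hφ.1] at hZ; simp at hZ
    · exact h
  obtain ⟨p₀, hp₀⟩ := hne
  have hnodes0 : ∀ t ∈ Nodes (fun _ => 1) 0, t = ([] : List ℕ) := by
    intro t ht; exact ht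
  refine ⟨⟨fun _ => 1, fun _ => p₀, fun _ => Y0 ∪ {p₀}, ?_, ?_, ?_, ?_, ?_, ?_⟩, trivial⟩
  · intro k hk; omega
  · intro k hk l hl t ht t' ht' _
    interval_cases k
    interval_cases l
    rw [hnodes0 t ht, hnodes0 t' ht']
  · intro k hk t ht
    exact hp₀
  · intro k hk; omega
  · intro k hk t ht
    exact Or.inr rfl
  · intro k hk; omega

noncomputable def treeSeq {φ : Set ℕ → ENNReal} {M : ℕ} {G : Set (Set ℕ)}
    (hφ : IsSubmeasure φ) (hlsc : IsLscSubmeasure φ)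
    (hG : ∀ Y ∈ G, φ Y ≤ M ∧ φ {p | Y ∪ {p} ∈ G} = ⊤)
    (Y0 : Set ℕ) (hY0 : Y0 ∈ G) : (n : ℕ) → TreeSt φ G n
  | 0 => (tree_base hφ hG Y0 hY0).choose
  | n+1 => (tree_step hφ hlsc hG (treeSeq hφ hlsc hG Y0 hY0 n)).choose

section Build

variable {φ : Set ℕ → ENNReal} {M : ℕ} {G : Set (Set ℕ)}
    (hφ : IsSubmeasure φ) (hlsc : IsLscSubmeasure φ)
    (hG : ∀ Y ∈ G, φ Y ≤ M ∧ φ {p | Y ∪ {p} ∈ G} = ⊤)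
    (Y0 : Set ℕ) (hY0 : Y0 ∈ G)

local notation "ts" => treeSeq hφ hlsc hG Y0 hY0

theorem treeSeq_ext (n : ℕ) :
    (∀ k < n, (ts (n+1)).c k = (ts n).c k) ∧
    (∀ t : List ℕ, t.length ≤ n → (ts (n+1)).a t = (ts n).a t) ∧
    (∀ t : List ℕ, t.length ≤ n → (ts (n+1)).Y t = (ts n).Y t) := by
  have h : ts (n+1) = (tree_step hφ hlsc hG (ts n)).choose := rfl
  rw [h]
  exact (tree_step hφ hlsc hG (ts n)).choose_spec

/-- the limit objects -/
noncomputable def cF : ℕ → ℕ := fun n => (ts (n+1)).c n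
noncomputable def aF : List ℕ → ℕ := fun t => (ts t.length).a t
noncomputable def YF : List ℕ → Set ℕ := fun t => (ts t.length).Y t

local notation "cc" => cF hφ hlsc hG Y0 hY0
local notation "aa" => aF hφ hlsc hG Y0 hY0
local notation "YY" => YF hφ hlsc hG Y0 hY0

theorem c_stab : ∀ m n, n < m → (ts m).c n = cc n := by
  intro m
  induction m with
  | zero => intro n hn; omega
  | succ m ih =>
    intro n hn
    rcases Nat.lt_succ_iff_lt_or_eq.1 hn with h | h
    · rw [(treeSeq_ext hφ hlsc hG Y0 hY0 m).1 n h]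
      exact ih n h
    · subst h; rfl

theorem a_stab : ∀ m (t : List ℕ), t.length ≤ m → (ts m).a t = aa t := by
  intro m
  induction m with
  | zero =>
    intro t ht
    have h : t.length = 0 := by omega
    show (ts 0).a t = (ts t.length).a t
    rw [h]
  | succ m ih =>
    intro t ht
    rcases Nat.lt_succ_iff_lt_or_eq.1 (Nat.lt_succ_of_le ht) with h | h
    · have h2 : t.length ≤ m := by omega
      rw [(treeSeq_ext hφ hlsc hG Y0 hY0 m).2.1 t h2]
      exact ih t h2
    · show (ts (m+1)).a t = (ts t.length).a t
      rw [h]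

theorem Y_stab : ∀ m (t : List ℕ), t.length ≤ m → (ts m).Y t = YY t := by
  intro m
  induction m with
  | zero =>
    intro t ht
    have h : t.length = 0 := by omega
    show (ts 0).Y t = (ts t.length).Y t
    rw [h]
  | succ m ih =>
    intro t ht
    rcases Nat.lt_succ_iff_lt_or_eq.1 (Nat.lt_succ_of_le ht) with h | h
    · have h2 : t.length ≤ m := by omega
      rw [(treeSeq_ext hφ hlsc hG Y0 hY0 m).2.2 t h2]
      exact ih t h2
    · show (ts (m+1)).Y t = (ts t.length).Y t
      rw [h]

theorem nodes_stab : ∀ m k, k ≤ m → Nodes ((ts m).c) k = Nodes cc k := by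
  intro m k hk
  exact nodes_congr (fun i hi => c_stab hφ hlsc hG Y0 hY0 m i (lt_of_lt_of_le hi hk))

theorem invF1 (n : ℕ) : 1 ≤ cc n := (ts (n+1)).inv1 n (Nat.lt_succ_self n)

theorem invF2 : ∀ t t', t ∈ Nodes cc t.length → t' ∈ Nodes cc t'.length →
    aa t = aa t' → t = t' := by
  intro t t' ht ht' heq
  set m := max t.length t'.length with hm
  have h1 : t.length ≤ m := le_max_left _ _
  have h2 : t'.length ≤ m := le_max_right _ _
  refine (ts m).inv2 t.length h1 t'.length h2 t ?_ t' ?_ ?_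
  · rw [nodes_stab hφ hlsc hG Y0 hY0 m t.length h1]; exact ht
  · rw [nodes_stab hφ hlsc hG Y0 hY0 m t'.length h2]; exact ht'
  · rw [a_stab hφ hlsc hG Y0 hY0 m t h1, a_stab hφ hlsc hG Y0 hY0 m t' h2]
    exact heq

theorem invF3 (n : ℕ) : ∀ t ∈ Nodes cc n, YY t ∈ G := by
  intro t ht
  have hlen : t.length = n := nodes_length ht
  have h := (ts n).inv3 n le_rfl t (by rw [nodes_stab hφ hlsc hG Y0 hY0 n n le_rfl]; exact ht)
  rwa [Y_stab hφ hlsc hG Y0 hY0 n t (le_of_eq hlen)] at h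

theorem invF4 (n : ℕ) : ∀ t ∈ Nodes cc n, ∀ i < cc n,
    YY (t ++ [i]) = YY t ∪ {aa (t ++ [i])} := by
  intro t ht i hi
  have hlen : t.length = n := nodes_length ht
  have h := (ts (n+1)).inv4 n (Nat.lt_succ_self n) t
    (by rw [nodes_stab hφ hlsc hG Y0 hY0 (n+1) n (Nat.le_succ n)]; exact ht) i
    (by rw [c_stab hφ hlsc hG Y0 hY0 (n+1) n (Nat.lt_succ_self n)]; exact hi)
  rwa [Y_stab hφ hlsc hG Y0 hY0 (n+1) (t ++ [i]) (by simp [hlen]),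
    Y_stab hφ hlsc hG Y0 hY0 (n+1) t (by omega),
    a_stab hφ hlsc hG Y0 hY0 (n+1) (t ++ [i]) (by simp [hlen])] at h

theorem invF5 (n : ℕ) : ∀ t ∈ Nodes cc n, aa t ∈ YY t := by
  intro t ht
  have hlen : t.length = n := nodes_length ht
  have h := (ts n).inv5 n le_rfl t (by rw [nodes_stab hφ hlsc hG Y0 hY0 n n le_rfl]; exact ht)
  rwa [Y_stab hφ hlsc hG Y0 hY0 n t (le_of_eq hlen),
    a_stab hφ hlsc hG Y0 hY0 n t (le_of_eq hlen)] at h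

theorem invF6 (n : ℕ) : ∀ t ∈ Nodes cc n,
    ((n : ENNReal) + 1) < φ ((fun i => aa (t ++ [i])) '' (Set.Iio (cc n))) := by
  intro t ht
  have hlen : t.length = n := nodes_length ht
  have h := (ts (n+1)).inv6 n (Nat.lt_succ_self n) t
    (by rw [nodes_stab hφ hlsc hG Y0 hY0 (n+1) n (Nat.le_succ n)]; exact ht)
  rw [c_stab hφ hlsc hG Y0 hY0 (n+1) n (Nat.lt_succ_self n)] at h
  have himg : (fun i => (ts (n+1)).a (t ++ [i])) '' (Set.Iio (cc n))
      = (fun i => aa (t ++ [i])) '' (Set.Iio (cc n)) := by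
    apply Set.image_congr
    intro i _
    exact a_stab hφ hlsc hG Y0 hY0 (n+1) (t ++ [i]) (by simp [hlen])
  rwa [himg] at h

end Build


theorem finite_subset_chain {Y : ℕ → Set ℕ} (hmono : ∀ a b, a ≤ b → Y a ⊆ Y b)
    {S : Set ℕ} (hS : S.Finite) : S ⊆ ⋃ n, Y n → ∃ K, S ⊆ Y K := by
  refine Set.Finite.induction_on (motive := fun S _ => S ⊆ ⋃ n, Y n → ∃ K, S ⊆ Y K) S hS (fun _ => ⟨0, Set.empty_subset _⟩) ?_
  intro a s _ _ ih hsub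
  obtain ⟨K, hK⟩ := ih (fun q hq => hsub (Set.mem_insert_of_mem a hq))
  obtain ⟨K', hK'⟩ := Set.mem_iUnion.1 (hsub (Set.mem_insert a s))
  refine ⟨max K K', ?_⟩
  intro q hq
  rcases hq with rfl | hq
  · exact hmono K' (max K K') (le_max_right _ _) hK'
  · exact hmono K (max K K') (le_max_left _ _) (hK hq)

theorem phi_eq_top_of_forall_lt {φ : Set ℕ → ENNReal} {A : Set ℕ}
    (h : ∀ n : ℕ, (n : ENNReal) < φ A) : φ A = ⊤ := by
  by_contra hc
  obtain ⟨n, hn⟩ := ENNReal.exists_nat_gt hc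
  exact absurd (h n) (not_lt_of_gt hn)

theorem construction {φ : Set ℕ → ENNReal} {M : ℕ} {G : Set (Set ℕ)}
    (hφ : IsSubmeasure φ) (hlsc : IsLscSubmeasure φ)
    (hG : ∀ Y ∈ G, φ Y ≤ M ∧ φ {p | Y ∪ {p} ∈ G} = ⊤)
    (hne : G.Nonempty) :
    ∃ (A : Set ℕ) (c : ℕ → ℕ) (f : ↥A → List ℕ),
      φ A = ⊤ ∧
      (∀ n : ℕ, 1 ≤ c n) ∧
      Function.Injective f ∧ Set.range f = Tc c ∧
      (∀ (n : ℕ) (t : List ℕ), t ∈ Tc c → t.length = n →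
        (n + 1 : ENNReal) <
          φ (Subtype.val '' (f ⁻¹' {s : List ℕ | ∃ i : ℕ, i < c n ∧ s = t ++ [i]}))) ∧
      (∀ x : ℕ → ℕ, (∀ i : ℕ, x i < c i) →
        φ (Subtype.val '' (f ⁻¹' branchOf x)) < ⊤) := by
  classical
  obtain ⟨Y0, hY0⟩ := hne
  set cc := cF hφ hlsc hG Y0 hY0 with hccdef
  set aa := aF hφ hlsc hG Y0 hY0 with haadef
  set YY := YF hφ hlsc hG Y0 hY0 with hYYdef
  set TT : Set (List ℕ) := {t | t ∈ Nodes cc t.length} with hTT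
  have hTc : Tc cc = TT := by
    ext t; exact tc_eq_nodes cc
  -- members of TT
  have hchild : ∀ {t : List ℕ} {n i : ℕ}, t ∈ Nodes cc n → i < cc n → t ++ [i] ∈ TT := by
    intro t n i ht hi
    have hlen : (t ++ [i]).length = n + 1 := by simp [nodes_length ht]
    show t ++ [i] ∈ Nodes cc (t ++ [i]).length
    rw [hlen]
    exact ⟨t, ht, i, hi, rfl⟩
  have hmemTT : ∀ {t : List ℕ} {n : ℕ}, t ∈ Nodes cc n → t ∈ TT := by
    intro t n ht
    show t ∈ Nodes cc t.length
    rwa [nodes_length ht]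
  set A : Set ℕ := aa '' TT with hA
  set f : ↥A → List ℕ := fun p => Classical.choose p.2 with hf
  have hfspec : ∀ p : ↥A, f p ∈ TT ∧ aa (f p) = p.1 := by
    intro p
    exact Classical.choose_spec p.2
  have hinj := invF2 hφ hlsc hG Y0 hY0
  -- injectivity of f
  have hfinj : Function.Injective f := by
    intro p q hpq
    apply Subtype.ext
    rw [← (hfspec p).2, ← (hfspec q).2, hpq]
  -- range f
  have hrange : Set.range f = Tc cc := by
    rw [hTc]
    apply Set.Subset.antisymm
    · rintro t ⟨p, rfl⟩
      exact (hfspec p).1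
    · intro t ht
      have hmem : aa t ∈ A := ⟨t, ht, rfl⟩
      refine ⟨⟨aa t, hmem⟩, ?_⟩
      have h1 := hfspec ⟨aa t, hmem⟩
      exact hinj _ _ h1.1 ht h1.2
  -- condition (i)
  have hcondi : ∀ (n : ℕ) (t : List ℕ), t ∈ Nodes cc n →
      Subtype.val '' (f ⁻¹' {s : List ℕ | ∃ i : ℕ, i < cc n ∧ s = t ++ [i]})
      = (fun i => aa (t ++ [i])) '' (Set.Iio (cc n)) := by
    intro n t ht
    ext q
    constructor
    · rintro ⟨p, hp, rfl⟩
      obtain ⟨i, hi, heq⟩ := hp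
      refine ⟨i, hi, ?_⟩
      show aa (t ++ [i]) = p.1
      rw [← heq]
      exact (hfspec p).2
    · rintro ⟨i, hi, rfl⟩
      have hu : t ++ [i] ∈ TT := hchild ht hi
      have hmem : aa (t ++ [i]) ∈ A := ⟨t ++ [i], hu, rfl⟩
      refine ⟨⟨aa (t ++ [i]), hmem⟩, ?_, rfl⟩
      show f ⟨aa (t ++ [i]), hmem⟩ ∈ {s : List ℕ | ∃ j : ℕ, j < cc n ∧ s = t ++ [j]}
      have h1 := hfspec ⟨aa (t ++ [i]), hmem⟩
      have h2 : f ⟨aa (t ++ [i]), hmem⟩ = t ++ [i] := hinj _ _ h1.1 hu h1.2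
      exact ⟨i, hi, h2⟩
  refine ⟨A, cc, f, ?_, invF1 hφ hlsc hG Y0 hY0, hfinj, hrange, ?_, ?_⟩
  · -- φ A = ⊤
    apply phi_eq_top_of_forall_lt
    intro n
    have ht : List.replicate n 0 ∈ Nodes cc n :=
      replicate_mem_nodes (fun k _ => invF1 hφ hlsc hG Y0 hY0 k)
    have h1 := invF6 hφ hlsc hG Y0 hY0 n (List.replicate n 0) ht
    have h2 : (fun i => aa (List.replicate n 0 ++ [i])) '' (Set.Iio (cc n)) ⊆ A := by
      rintro q ⟨i, hi, rfl⟩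
      exact ⟨List.replicate n 0 ++ [i], hchild ht hi, rfl⟩
    calc (n : ENNReal) < (n : ENNReal) + 1 :=
          ENNReal.lt_add_right (ENNReal.natCast_ne_top n) one_ne_zero
      _ < φ _ := h1
      _ ≤ φ A := phi_mono hφ h2
  · -- condition (i)
    intro n t ht hlen
    have htn : t ∈ Nodes cc n := by
      rw [hTc] at ht
      show t ∈ Nodes cc n
      rw [← hlen]
      exact ht
    rw [hcondi n t htn]
    exact invF6 hφ hlsc hG Y0 hY0 n t htn
  · -- condition (ii)
    intro x hx
    set X : ℕ → List ℕ := fun n => (List.range n).map x with hX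
    have hXsucc : ∀ n, X (n+1) = X n ++ [x n] := by
      intro n
      rw [hX]
      simp [List.range_succ]
    have hXmem : ∀ n, X n ∈ Nodes cc n := by
      intro n
      induction n with
      | zero => exact rfl
      | succ n ih =>
        rw [hXsucc n]
        exact ⟨X n, ih, x n, hx n, rfl⟩
    have hYmono : ∀ a b, a ≤ b → YY (X a) ⊆ YY (X b) := by
      intro a b hab
      induction b with
      | zero =>
        have : a = 0 := by omega
        subst this; exact subset_rfl
      | succ b ih =>
        rcases Nat.lt_succ_iff_lt_or_eq.1 (Nat.lt_succ_of_le hab) with h | h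
        · have h2 := ih (by omega)
          refine subset_trans h2 ?_
          have h3 := invF4 hφ hlsc hG Y0 hY0 b (X b) (hXmem b) (x b) (hx b)
          rw [hXsucc b]
          show YF hφ hlsc hG Y0 hY0 (X b) ⊆ YF hφ hlsc hG Y0 hY0 (X b ++ [x b])
          rw [h3]
          exact Set.subset_union_left
        · rw [h]
    have hset : Subtype.val '' (f ⁻¹' branchOf x) ⊆ ⋃ n, YY (X n) := by
      rintro q ⟨p, hp, rfl⟩
      obtain ⟨n, hn⟩ := hp
      have h1 : p.1 = aa (X n) := by
        rw [← (hfspec p).2, hn]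
      rw [h1]
      exact Set.mem_iUnion.2 ⟨n, invF5 hφ hlsc hG Y0 hY0 n (X n) (hXmem n)⟩
    have hBle : φ (⋃ n, YY (X n)) ≤ M := by
      rw [hlsc (⋃ n, YY (X n))]
      apply iSup_le
      intro N
      have hfin : ((⋃ n, YY (X n)) ∩ Set.Iio N).Finite :=
        (Set.finite_Iio N).subset Set.inter_subset_right
      obtain ⟨K, hK⟩ := finite_subset_chain hYmono hfin
        (subset_trans Set.inter_subset_left subset_rfl)
      calc φ ((⋃ n, YY (X n)) ∩ Set.Iio N) ≤ φ (YY (X K)) := phi_mono hφ hK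
        _ ≤ M := (hG _ (invF3 hφ hlsc hG Y0 hY0 K (X K) (hXmem K))).1
    calc φ (Subtype.val '' (f ⁻¹' branchOf x)) ≤ φ (⋃ n, YY (X n)) := phi_mono hφ hset
      _ ≤ M := hBle
      _ < ⊤ := by simp

section NP
variable (φ : Set ℕ → ENNReal)

def PhiM (M : ℕ) (G : Set (Set ℕ)) : Set (Set ℕ) :=
  {Y | φ Y ≤ M ∧ φ {p | Y ∪ {p} ∈ G} = ⊤}

noncomputable def gg (M : ℕ) (α : Ordinal.{0}) : Set (Set ℕ) :=
  {Y | ∀ β, (h : β < α) → Y ∈ PhiM φ M (gg M β)}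
termination_by α
decreasing_by exact h

theorem gg_def (M : ℕ) (α : Ordinal.{0}) :
    gg φ M α = {Y | ∀ β, β < α → Y ∈ PhiM φ M (gg φ M β)} := by
  rw [gg]

theorem gg_anti (M : ℕ) {α α' : Ordinal.{0}} (h : α ≤ α') : gg φ M α' ⊆ gg φ M α := by
  intro Y hY
  rw [gg_def] at hY ⊢
  exact fun β hβ => hY β (lt_of_lt_of_le hβ h)

/-- the "no nonempty closed family" hypothesis -/
def NP : Prop := ∀ M : ℕ, ∀ G : Set (Set ℕ),
  (∀ Y ∈ G, φ Y ≤ M ∧ φ {p | Y ∪ {p} ∈ G} = ⊤) → G = ∅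

theorem gg_empty (hnP : NP φ) (M : ℕ) : ∃ α : Ordinal.{0}, gg φ M α = ∅ := by
  have h := Cardinal.not_injective_limitation_set (gg φ M)
  rw [Set.injOn_iff_injective] at h
  have h2 : ∃ a b : (Set.Iio (Cardinal.ord <| Order.succ (Cardinal.mk (Set (Set ℕ))))),
      gg φ M a.1 = gg φ M b.1 ∧ a ≠ b := by
    by_contra hcon
    push_neg at hcon
    exact h (fun a b hab => hcon a b hab)
  obtain ⟨a, b, hab, hne⟩ := h2
  have hne' : a.1 ≠ b.1 := fun h' => hne (Subtype.ext h')
  rcases lt_or_gt_of_ne hne' with hlt | hlt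
  · refine ⟨a.1, hnP M _ ?_⟩
    intro Y hY
    have h3 : Y ∈ gg φ M b.1 := hab ▸ hY
    rw [gg_def] at h3
    exact h3 a.1 hlt
  · refine ⟨b.1, hnP M _ ?_⟩
    intro Y hY
    have h3 : Y ∈ gg φ M a.1 := hab.symm ▸ hY
    rw [gg_def] at h3
    exact h3 b.1 hlt

noncomputable def outY (M : ℕ) (Y : Set ℕ) : Ordinal.{0} := sInf {α | Y ∉ gg φ M α}

noncomputable def bb (M : ℕ) (Y : Set ℕ) : Ordinal.{0} :=
  if h : ∃ β, Y ∈ gg φ M β ∧ Y ∉ PhiM φ M (gg φ M β) then h.choose else 0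

noncomputable def SY (M : ℕ) (Y : Set ℕ) : Set ℕ :=
  {p | Y ∪ {p} ∈ gg φ M (bb φ M Y)}

theorem out_spec (hnP : NP φ) (M : ℕ) (Y : Set ℕ) : Y ∉ gg φ M (outY φ M Y) := by
  have h : {α : Ordinal.{0} | Y ∉ gg φ M α}.Nonempty := by
    obtain ⟨α, hα⟩ := gg_empty φ hnP M
    exact ⟨α, by simp [hα]⟩
  exact csInf_mem h

theorem out_min (M : ℕ) (Y : Set ℕ) {β : Ordinal.{0}} (h : β < outY φ M Y) :
    Y ∈ gg φ M β := by
  by_contra hc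
  have : outY φ M Y ≤ β := csInf_le (OrderBot.bddBelow _) hc
  exact absurd this (not_le_of_gt h)

theorem bb_ex (hnP : NP φ) (M : ℕ) (Y : Set ℕ) :
    ∃ β, Y ∈ gg φ M β ∧ Y ∉ PhiM φ M (gg φ M β) := by
  have h := out_spec φ hnP M Y
  rw [gg_def] at h
  simp only [Set.mem_setOf_eq, not_forall] at h
  obtain ⟨β, hβ, hY⟩ := h
  exact ⟨β, out_min φ M Y hβ, hY⟩

theorem bb_spec (hnP : NP φ) (M : ℕ) (Y : Set ℕ) :
    Y ∈ gg φ M (bb φ M Y) ∧ Y ∉ PhiM φ M (gg φ M (bb φ M Y)) := by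
  rw [bb, dif_pos (bb_ex φ hnP M Y)]
  exact (bb_ex φ hnP M Y).choose_spec

theorem SY_small (hnP : NP φ) (M : ℕ) (Y : Set ℕ) (hYM : φ Y ≤ M) : φ (SY φ M Y) < ⊤ := by
  have h := (bb_spec φ hnP M Y).2
  rw [PhiM] at h
  simp only [Set.mem_setOf_eq, not_and] at h
  exact lt_top_iff_ne_top.2 (h hYM)

theorem bb_lt_out (hnP : NP φ) (M : ℕ) (Y : Set ℕ) : bb φ M Y < outY φ M Y := by
  by_contra hc
  push_neg at hc
  exact out_spec φ hnP M Y (gg_anti φ M hc (bb_spec φ hnP M Y).1)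

theorem out_escape (hnP : NP φ) (M : ℕ) (Y : Set ℕ) {p : ℕ} (hp : p ∉ SY φ M Y) :
    outY φ M (Y ∪ {p}) < outY φ M Y :=
  lt_of_le_of_lt (csInf_le (OrderBot.bddBelow _) hp) (bb_lt_out φ hnP M Y)

theorem cover (hnP : NP φ) (M : ℕ) (C : Set ℕ) :
    ∀ (α : Ordinal.{0}) (Y : Set ℕ), Y ⊆ C → Y.Finite → outY φ M Y = α →
      ∃ Y', Y' ⊆ C ∧ Y'.Finite ∧ C ⊆ Y' ∪ SY φ M Y' := by
  intro α
  induction α using Ordinal.induction with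
  | h α IH =>
    intro Y hYC hYfin hout
    by_cases hcov : C ⊆ Y ∪ SY φ M Y
    · exact ⟨Y, hYC, hYfin, hcov⟩
    · obtain ⟨p, hpC, hpn⟩ := Set.not_subset.1 hcov
      simp only [Set.mem_union, not_or] at hpn
      have hesc := out_escape φ hnP M Y hpn.2
      rw [hout] at hesc
      exact IH _ hesc (Y ∪ {p}) (Set.union_subset hYC (by simpa using hpC))
        (hYfin.union (Set.finite_singleton p)) rfl

end NP

theorem cg_of_NP (hφ : IsSubmeasure φ) (hnP : NP φ) :
    IdealCountablyGenerated {A : Set ℕ | φ A < ⊤} := by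
  classical
  refine ⟨{D | (∃ M : ℕ, ∃ Y : Set ℕ, Y.Finite ∧ D = SY φ M Y) ∧ φ D < ⊤}
    ∪ {D | ∃ n : ℕ, D = {n}}, ?_, ?_, ?_⟩
  · apply Set.Countable.union
    · have h1 : {D | (∃ M : ℕ, ∃ Y : Set ℕ, Y.Finite ∧ D = SY φ M Y) ∧ φ D < ⊤}
          ⊆ Set.range (fun q : ℕ × Finset ℕ => SY φ q.1 ↑q.2) := by
        rintro D ⟨⟨M, Y, hYfin, rfl⟩, -⟩
        exact ⟨(M, hYfin.toFinset), by simp⟩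
      exact (Set.countable_range _).mono h1
    · exact (Set.countable_range (fun n : ℕ => ({n} : Set ℕ))).mono
        (by rintro D ⟨n, rfl⟩; exact ⟨n, rfl⟩)
  · rintro D (⟨-, hD⟩ | ⟨n, rfl⟩)
    · exact hD
    · exact hφ.2.1 n
  · intro A hA
    obtain ⟨M, hM⟩ := ENNReal.exists_nat_gt (ne_of_lt hA)
    have hAM : φ A ≤ M := le_of_lt hM
    obtain ⟨Y', hY'A, hY'fin, hY'cov⟩ :=
      cover φ hnP M A (outY φ M ∅) ∅ (Set.empty_subset A) Set.finite_empty rfl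
    refine ⟨insert (SY φ M Y') ((fun n : ℕ => ({n} : Set ℕ)) '' Y'), ?_, ?_, ?_⟩
    · rintro D (rfl | ⟨n, hn, rfl⟩)
      · exact Or.inl ⟨⟨M, Y', hY'fin, rfl⟩,
          SY_small φ hnP M Y' (le_trans (phi_mono hφ hY'A) hAM)⟩
      · exact Or.inr ⟨n, rfl⟩
    · exact (hY'fin.image _).insert _
    · intro p hp
      rcases hY'cov hp with hp1 | hp2
      · exact ⟨{p}, Or.inr ⟨p, hp1, rfl⟩, rfl⟩
      · exact ⟨SY φ M Y', Or.inl rfl, hp2⟩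

end Aux

/-- If `φ` is an lsc submeasure with `φ(ω) = ∞` such that `Fin(φ)` is not countably
generated, then there are `A ∉ Fin(φ)`, `c ∈ ω^ω` with `c(n) ≥ 1`, and a bijection
`f : A → T_c` such that (i) `φ(f⁻¹[{t⌢(i) : i < c(n)}]) > n+1` for every `t ∈ T_c` of
length `n`, and (ii) `f⁻¹[A_x] ∈ Fin(φ)` for every branch `x` of `T_c`. -/
theorem exists_tree_structure_of_not_ctblyGen (φ : Set ℕ → ENNReal)
    (hφ : IsSubmeasure φ) (hlsc : IsLscSubmeasure φ) (htop : φ Set.univ = ⊤)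
    (hng : ¬ IdealCountablyGenerated {A : Set ℕ | φ A < ⊤}) :
    ∃ (A : Set ℕ) (c : ℕ → ℕ) (f : ↥A → List ℕ),
      φ A = ⊤ ∧
      (∀ n : ℕ, 1 ≤ c n) ∧
      Function.Injective f ∧ Set.range f = Tc c ∧
      (∀ (n : ℕ) (t : List ℕ), t ∈ Tc c → t.length = n →
        (n + 1 : ENNReal) <
          φ (Subtype.val '' (f ⁻¹' {s : List ℕ | ∃ i : ℕ, i < c n ∧ s = t ++ [i]}))) ∧
      (∀ x : ℕ → ℕ, (∀ i : ℕ, x i < c i) →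
        φ (Subtype.val '' (f ⁻¹' branchOf x)) < ⊤) := by
  by_cases hP : ∃ M : ℕ, ∃ G : Set (Set ℕ), G.Nonempty ∧
      ∀ Y ∈ G, φ Y ≤ M ∧ φ {p | Y ∪ {p} ∈ G} = ⊤
  · obtain ⟨M, G, hne, hG⟩ := hP
    exact construction hφ hlsc hG hne
  · exfalso
    apply hng
    apply cg_of_NP hφ
    intro M G hG
    by_contra hne
    exact hP ⟨M, G, Set.nonempty_iff_ne_empty.2 hne, hG⟩
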